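/- Let Q be a quantale and γ ∈ Q with γ ≠ ⊤. Assume (a) γ * α ⊔ α * γ ≤ α for all α ∈ Q; (b) for all α ∈ Q and all β ∈ Q with β ≰ γ one has ⊤ * α ≤ (β * α) ⊔ α and α * ⊤ ≤ (α * β) ⊔ α; and (c) there exist α, β ∈ Q with γ ⊓ (α ⊔ β) ≰ (γ ⊓ α) ⊔ (γ ⊓ β). Then there exist a unital quantale M with unit e and an injective multiplicative map ι : Q → M preserving arbitrary suprema and nonempty infima, with every element of M in range ι ∪ {e, ⊤_M}, e, ⊤_M ∉ range ι, {m | m ≤ e} \ {e} = {m | m ≤ ι γ} and {m | e ≤ m} \ {e} = {⊤_M}, such that M is unitally nondistributive: e ≤ sSup {m ∈ M | m ◁ e} and there exists A ⊆ M with e ⊓ sSup A ≰ ⨆ m ∈ A, (e ⊓ m). -/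

import Mathlib

universe u

namespace Stmt11Aux

inductive M (Q : Type u) : Type u
  | top : M Q
  | unit : M Q
  | emb : Q → M Q

variable {Q : Type u} [CompleteLattice Q]

open M

def Mle (γ : Q) : M Q → M Q → Prop
  | _, top => True
  | top, _ => False
  | unit, unit => True
  | unit, emb _ => False
  | emb a, unit => a ≤ γ
  | emb a, emb b => a ≤ b

open Classical in
noncomputable def MsSup (γ : Q) (S : Set (M Q)) : M Q :=
  if top ∈ S ∨ (unit ∈ S ∧ ∃ a : Q, emb a ∈ S ∧ ¬ a ≤ γ) then top
  else if unit ∈ S then unit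
  else emb (sSup {a : Q | emb a ∈ S})

theorem Mle_top (γ : Q) (m : M Q) : Mle γ m top := by
  rcases m with _ | _ | a <;> trivial

def MPO (γ : Q) : PartialOrder (M Q) where
  le := Mle γ
  lt a b := Mle γ a b ∧ ¬ Mle γ b a
  lt_iff_le_not_ge _ _ := Iff.rfl
  le_refl x := by rcases x with _ | _ | a <;> first | trivial | exact le_refl a
  le_trans x y z hxy hyz := by
    rcases x with _ | _ | a <;> rcases y with _ | _ | b <;> rcases z with _ | _ | c <;>
      simp only [Mle] at * <;> first | trivial | exact le_trans hxy hyz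
  le_antisymm x y hxy hyx := by
    rcases x with _ | _ | a <;> rcases y with _ | _ | b <;>
      simp only [Mle] at * <;> first | trivial | exact congrArg emb (le_antisymm hxy hyx)

theorem isLUB_MsSup (γ : Q) (S : Set (M Q)) : letI := MPO γ; IsLUB S (MsSup γ S) := by
  letI := MPO γ
  classical
  constructor
  · intro m hm
    by_cases h1 : top ∈ S ∨ (unit ∈ S ∧ ∃ a : Q, emb a ∈ S ∧ ¬ a ≤ γ)
    · show Mle γ m (MsSup γ S)
      rw [MsSup, if_pos h1]; exact Mle_top γ m
    · by_cases h2 : (unit : M Q) ∈ S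
      · show Mle γ m (MsSup γ S)
        rw [MsSup, if_neg h1, if_pos h2]
        rcases m with _ | _ | a
        · exact absurd (Or.inl hm) h1
        · trivial
        · by_contra hle
          exact h1 (Or.inr ⟨h2, a, hm, hle⟩)
      · show Mle γ m (MsSup γ S)
        rw [MsSup, if_neg h1, if_neg h2]
        rcases m with _ | _ | a
        · exact absurd (Or.inl hm) h1
        · exact absurd hm h2
        · exact le_sSup hm
  · intro x hx
    by_cases h1 : top ∈ S ∨ (unit ∈ S ∧ ∃ a : Q, emb a ∈ S ∧ ¬ a ≤ γ)
    · show Mle γ (MsSup γ S) x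
      rw [MsSup, if_pos h1]
      rcases x with _ | _ | b
      · trivial
      · rcases h1 with hn | ⟨he, a, haS, hna⟩
        · exact (hx hn : Mle γ top unit).elim
        · exact hna (hx haS : Mle γ (emb a) unit)
      · rcases h1 with hn | ⟨he, a, haS, hna⟩
        · exact (hx hn : Mle γ top (emb b)).elim
        · exact (hx he : Mle γ unit (emb b)).elim
    · by_cases h2 : (unit : M Q) ∈ S
      · show Mle γ (MsSup γ S) x
        rw [MsSup, if_neg h1, if_pos h2]
        exact hx h2
      · show Mle γ (MsSup γ S) x
        rw [MsSup, if_neg h1, if_neg h2]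
        rcases x with _ | _ | b
        · trivial
        · show sSup {a : Q | emb a ∈ S} ≤ γ
          refine sSup_le fun a haS => ?_
          exact (hx haS : Mle γ (emb a) unit)
        · show sSup {a : Q | emb a ∈ S} ≤ b
          refine sSup_le fun a haS => ?_
          exact (hx haS : Mle γ (emb a) (emb b))

noncomputable def MCL (γ : Q) : CompleteLattice (M Q) :=
  letI := MPO γ
  letI : SupSet (M Q) := ⟨MsSup γ⟩
  completeLatticeOfSup _ (isLUB_MsSup γ)

section Lattice

variable (γ : Q)

theorem sSup_def (S : Set (M Q)) : letI := MCL γ; sSup S = MsSup γ S := rfl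

theorem top_def : (letI := MCL γ; (⊤ : M Q)) = top := by
  letI := MCL γ
  exact (top_unique (Mle_top γ ⊤)).symm

theorem emb_injective : Function.Injective (emb : Q → M Q) := fun a b h => by
  cases h; rfl

theorem emb_sSup' (A : Set Q) : letI := MCL γ; sSup (emb '' A) = emb (sSup A) := by
  letI := MCL γ
  rw [sSup_def, MsSup, if_neg, if_neg]
  · have hset : {a : Q | emb a ∈ emb '' A} = A := by
      ext a
      constructor
      · rintro ⟨b, hb, hba⟩
        rcases emb_injective (show emb b = emb a from hba) with rfl
        exact hb
      · intro haA
        exact ⟨a, haA, rfl⟩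
    rw [hset]
  · rintro ⟨b, _, h⟩
    exact nomatch h
  · rintro (⟨b, _, h⟩ | ⟨⟨b, _, h⟩, _⟩) <;> exact nomatch h

theorem emb_sSup (A : Set Q) : letI := MCL γ; emb (sSup A) = ⨆ a ∈ A, emb a := by
  letI := MCL γ
  rw [← sSup_image, emb_sSup']

theorem emb_sInf (A : Set Q) (hA : A.Nonempty) :
    letI := MCL γ; emb (sInf A) = ⨅ a ∈ A, emb a := by
  letI := MCL γ
  rw [← sInf_image]
  refine (IsGLB.sInf_eq ?_).symm
  constructor
  · rintro _ ⟨a, haA, rfl⟩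
    exact (show sInf A ≤ a from sInf_le haA : Mle γ (emb (sInf A)) (emb a))
  · intro x hx
    obtain ⟨a0, ha0⟩ := hA
    have h0 : Mle γ x (emb a0) := hx ⟨a0, ha0, rfl⟩
    rcases x with _ | _ | b
    · exact h0.elim
    · exact h0.elim
    · show b ≤ sInf A
      refine le_sInf fun a haA => ?_
      exact (hx ⟨a, haA, rfl⟩ : Mle γ (emb b) (emb a))

theorem unit_inf_emb (x : Q) : letI := MCL γ; unit ⊓ emb x = emb (γ ⊓ x) := by
  letI := MCL γ
  rw [← (sInf_pair : sInf {(unit : M Q), emb x} = _)]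
  refine IsGLB.sInf_eq ?_
  constructor
  · rintro m (rfl | rfl)
    · exact (inf_le_left : γ ⊓ x ≤ γ)
    · exact (inf_le_right : γ ⊓ x ≤ x)
  · intro y hy
    have h1 : Mle γ y unit := hy (Set.mem_insert _ _)
    have h2 : Mle γ y (emb x) := hy (Set.mem_insert_of_mem _ rfl)
    rcases y with _ | _ | b
    · exact h2.elim
    · exact h2.elim
    · exact (le_inf h1 h2 : b ≤ γ ⊓ x)

end Lattice

def Mmul (mul : Q → Q → Q) : M Q → M Q → M Q
  | unit, m => m
  | top, top => top
  | top, unit => top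
  | top, emb b => emb (b ⊔ mul ⊤ b)
  | emb a, unit => emb a
  | emb a, top => emb (a ⊔ mul a ⊤)
  | emb a, emb b => emb (mul a b)

theorem Mmul_unit (mul : Q → Q → Q) (m : M Q) :
    Mmul mul unit m = m ∧ Mmul mul m unit = m := by
  rcases m with _ | _ | a <;> exact ⟨rfl, rfl⟩

theorem Mmul_assoc (mul : Q → Q → Q)
    (hassoc : ∀ a b c : Q, mul (mul a b) c = mul a (mul b c))
    (hsup_l : ∀ a b c : Q, mul (a ⊔ b) c = mul a c ⊔ mul b c)
    (hsup_r : ∀ a b c : Q, mul a (b ⊔ c) = mul a b ⊔ mul a c)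
    (hmono_l : ∀ a b c : Q, a ≤ b → mul a c ≤ mul b c)
    (hmono_r : ∀ a b c : Q, a ≤ b → mul c a ≤ mul c b) :
    ∀ x y z : M Q, Mmul mul (Mmul mul x y) z = Mmul mul x (Mmul mul y z) := by
  intro x y z
  rcases x with _ | _ | a <;> rcases y with _ | _ | b <;> rcases z with _ | _ | c
  all_goals try rfl
  · -- (top, top, emb c)
    show emb (c ⊔ mul ⊤ c) = emb ((c ⊔ mul ⊤ c) ⊔ mul ⊤ (c ⊔ mul ⊤ c))
    refine congrArg emb (sup_eq_left.mpr ?_).symm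
    rw [hsup_r]
    refine sup_le le_sup_right ?_
    rw [← hassoc]
    exact le_trans (hmono_l _ _ _ le_top) le_sup_right
  · -- (top, emb b, top)
    refine congrArg emb ?_
    rw [hsup_l, hsup_r, ← hassoc, sup_sup_sup_comm]
  · -- (top, emb b, emb c)
    refine congrArg emb ?_
    rw [hsup_l, hassoc]
  · -- (emb a, top, top)
    refine congrArg emb (sup_eq_left.mpr ?_)
    rw [hsup_l]
    refine sup_le le_sup_right ?_
    rw [hassoc]
    exact le_trans (hmono_r _ _ _ le_top) le_sup_right
  · -- (emb a, top, emb c)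
    refine congrArg emb ?_
    rw [hsup_l, hsup_r, hassoc]
  · -- (emb a, emb b, top)
    refine congrArg emb ?_
    rw [hsup_r, hassoc]
  · -- (emb a, emb b, emb c)
    exact congrArg emb (hassoc a b c)

theorem Mmul_sSup_left (mul : Q → Q → Q) (γ : Q)
    (hsSup_left : ∀ (A : Set Q) (b : Q), mul (sSup A) b = ⨆ a ∈ A, mul a b)
    (ha : ∀ α : Q, mul γ α ⊔ mul α γ ≤ α)
    (hb1 : ∀ α β : Q, ¬ β ≤ γ → mul ⊤ α ≤ mul β α ⊔ α)
    (hmono_l : ∀ a b c : Q, a ≤ b → mul a c ≤ mul b c)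
    (S : Set (M Q)) (b : M Q) :
    letI := MCL γ; Mmul mul (sSup S) b = ⨆ m ∈ S, Mmul mul m b := by
  letI := MCL γ
  classical
  rw [← sSup_image]
  have hid : (fun m : M Q => Mmul mul m unit) '' S = S := by
    have h : (fun m : M Q => Mmul mul m unit) = id :=
      funext fun m => by rcases m with _ | _ | a <;> rfl
    rw [h, Set.image_id]
  by_cases h1 : top ∈ S ∨ (unit ∈ S ∧ ∃ a : Q, emb a ∈ S ∧ ¬ a ≤ γ)
  · have hS : sSup S = (top : M Q) := by rw [sSup_def, MsSup, if_pos h1]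
    rcases b with _ | _ | q
    · -- b = top
      have hmem : (top : M Q) ∈ (fun m : M Q => Mmul mul m M.top) '' S := by
        rcases h1 with hn | ⟨hu, _⟩
        exacts [⟨top, hn, rfl⟩, ⟨unit, hu, rfl⟩]
      rw [hS, sSup_def, MsSup, if_pos (Or.inl hmem)]
      rfl
    · -- b = unit
      rw [hid, hS]
      rfl
    · -- b = emb q
      rw [hS]
      let g : M Q → Q := fun m => match m with
        | M.top => q ⊔ mul ⊤ q
        | M.unit => q
        | M.emb a => mul a q
      have himg : (fun m : M Q => Mmul mul m (emb q)) '' S = emb '' (g '' S) := by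
        rw [← Set.image_comp]
        exact Set.image_congr fun m _ => by rcases m with _ | _ | a <;> rfl
      rw [himg, emb_sSup']
      refine congrArg emb (le_antisymm ?_ ?_)
      · rcases h1 with hn | ⟨hu, a0, ha0, hna0⟩
        · exact le_sSup ⟨top, hn, rfl⟩
        · refine sup_le (le_sSup ⟨unit, hu, rfl⟩) ?_
          exact le_trans (hb1 q a0 hna0)
            (sup_le (le_sSup ⟨emb a0, ha0, rfl⟩) (le_sSup ⟨unit, hu, rfl⟩))
      · refine sSup_le ?_
        rintro x ⟨m, hm, rfl⟩
        rcases m with _ | _ | a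
        · exact le_refl _
        · exact le_sup_left
        · exact le_trans (hmono_l a ⊤ q le_top) le_sup_right
  · by_cases h2 : (unit : M Q) ∈ S
    · have hS : sSup S = (unit : M Q) := by rw [sSup_def, MsSup, if_neg h1, if_pos h2]
      have htop : (top : M Q) ∉ S := fun h => h1 (Or.inl h)
      have hγA : ∀ a : Q, emb a ∈ S → a ≤ γ := fun a haS => by
        by_contra h
        exact h1 (Or.inr ⟨h2, a, haS, h⟩)
      rcases b with _ | _ | q
      · -- b = top
        have hmem : (top : M Q) ∈ (fun m : M Q => Mmul mul m M.top) '' S := ⟨unit, h2, rfl⟩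
        rw [hS, sSup_def, MsSup, if_pos (Or.inl hmem)]
        rfl
      · rw [hid, hS]
        rfl
      · rw [hS]
        let g : M Q → Q := fun m => match m with
          | M.top => q ⊔ mul ⊤ q
          | M.unit => q
          | M.emb a => mul a q
        have himg : (fun m : M Q => Mmul mul m (emb q)) '' S = emb '' (g '' S) := by
          rw [← Set.image_comp]
          exact Set.image_congr fun m _ => by rcases m with _ | _ | a <;> rfl
        rw [himg, emb_sSup']
        refine congrArg emb (le_antisymm (le_sSup ⟨unit, h2, rfl⟩) (sSup_le ?_))
        rintro x ⟨m, hm, rfl⟩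
        rcases m with _ | _ | a
        · exact absurd hm htop
        · exact le_refl q
        · exact le_trans (hmono_l a γ q (hγA a hm)) (le_trans le_sup_left (ha q))
    · have htop : (top : M Q) ∉ S := fun h => h1 (Or.inl h)
      have hS : sSup S = emb (sSup {a : Q | emb a ∈ S}) := by
        rw [sSup_def, MsSup, if_neg h1, if_neg h2]
      rcases b with _ | _ | q
      · -- b = top
        rw [hS]
        let g : M Q → Q := fun m => match m with
          | M.emb a => a ⊔ mul a ⊤
          | _ => (⊥ : Q)
        have himg : (fun m : M Q => Mmul mul m M.top) '' S = emb '' (g '' S) := by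
          rw [← Set.image_comp]
          refine Set.image_congr fun m hm => ?_
          rcases m with _ | _ | a
          · exact absurd hm htop
          · exact absurd hm h2
          · rfl
        rw [himg, emb_sSup']
        refine congrArg emb (le_antisymm ?_ ?_)
        · refine sup_le (sSup_le fun a haA => le_trans le_sup_left (le_sSup ⟨emb a, haA, rfl⟩)) ?_
          rw [hsSup_left]
          exact iSup₂_le fun a haA => le_trans le_sup_right (le_sSup ⟨emb a, haA, rfl⟩)
        · refine sSup_le ?_
          rintro x ⟨m, hm, rfl⟩
          rcases m with _ | _ | a
          · exact absurd hm htop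
          · exact absurd hm h2
          · exact sup_le (le_trans (le_sSup hm) le_sup_left)
              (le_trans (hmono_l a _ ⊤ (le_sSup hm)) le_sup_right)
      · rw [hid]
        rw [hS]
        rfl
      · rw [hS]
        let g : M Q → Q := fun m => match m with
          | M.top => q ⊔ mul ⊤ q
          | M.unit => q
          | M.emb a => mul a q
        have himg : (fun m : M Q => Mmul mul m (emb q)) '' S = emb '' (g '' S) := by
          rw [← Set.image_comp]
          exact Set.image_congr fun m _ => by rcases m with _ | _ | a <;> rfl
        rw [himg, emb_sSup']
        refine congrArg emb ?_
        have hgS : g '' S = (fun a => mul a q) '' {a : Q | emb a ∈ S} := by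
          ext x
          constructor
          · rintro ⟨m, hm, rfl⟩
            rcases m with _ | _ | a
            · exact absurd hm htop
            · exact absurd hm h2
            · exact ⟨a, hm, rfl⟩
          · rintro ⟨a, haA, rfl⟩
            exact ⟨emb a, haA, rfl⟩
        rw [hgS, sSup_image, hsSup_left]

theorem Mmul_sSup_right (mul : Q → Q → Q) (γ : Q)
    (hsSup_right : ∀ (A : Set Q) (b : Q), mul b (sSup A) = ⨆ a ∈ A, mul b a)
    (ha : ∀ α : Q, mul γ α ⊔ mul α γ ≤ α)
    (hb2 : ∀ α β : Q, ¬ β ≤ γ → mul α ⊤ ≤ mul α β ⊔ α)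
    (hmono_r : ∀ a b c : Q, a ≤ b → mul c a ≤ mul c b)
    (S : Set (M Q)) (b : M Q) :
    letI := MCL γ; Mmul mul b (sSup S) = ⨆ m ∈ S, Mmul mul b m := by
  letI := MCL γ
  classical
  rw [← sSup_image]
  have hid : (fun m : M Q => Mmul mul unit m) '' S = S := by
    have h : (fun m : M Q => Mmul mul unit m) = id :=
      funext fun m => by rcases m with _ | _ | a <;> rfl
    rw [h, Set.image_id]
  by_cases h1 : top ∈ S ∨ (unit ∈ S ∧ ∃ a : Q, emb a ∈ S ∧ ¬ a ≤ γ)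
  · have hS : sSup S = (top : M Q) := by rw [sSup_def, MsSup, if_pos h1]
    rcases b with _ | _ | q
    · -- b = top
      have hmem : (top : M Q) ∈ (fun m : M Q => Mmul mul M.top m) '' S := by
        rcases h1 with hn | ⟨hu, _⟩
        exacts [⟨top, hn, rfl⟩, ⟨unit, hu, rfl⟩]
      rw [hS, sSup_def, MsSup, if_pos (Or.inl hmem)]
      rfl
    · -- b = unit
      rw [hid, hS]
      rfl
    · -- b = emb q
      rw [hS]
      let g : M Q → Q := fun m => match m with
        | M.top => q ⊔ mul q ⊤
        | M.unit => q
        | M.emb a => mul q a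
      have himg : (fun m : M Q => Mmul mul (emb q) m) '' S = emb '' (g '' S) := by
        rw [← Set.image_comp]
        exact Set.image_congr fun m _ => by rcases m with _ | _ | a <;> rfl
      rw [himg, emb_sSup']
      refine congrArg emb (le_antisymm ?_ ?_)
      · rcases h1 with hn | ⟨hu, a0, ha0, hna0⟩
        · exact le_sSup ⟨top, hn, rfl⟩
        · refine sup_le (le_sSup ⟨unit, hu, rfl⟩) ?_
          exact le_trans (hb2 q a0 hna0)
            (sup_le (le_sSup ⟨emb a0, ha0, rfl⟩) (le_sSup ⟨unit, hu, rfl⟩))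
      · refine sSup_le ?_
        rintro x ⟨m, hm, rfl⟩
        rcases m with _ | _ | a
        · exact le_refl _
        · exact le_sup_left
        · exact le_trans (hmono_r a ⊤ q le_top) le_sup_right
  · by_cases h2 : (unit : M Q) ∈ S
    · have hS : sSup S = (unit : M Q) := by rw [sSup_def, MsSup, if_neg h1, if_pos h2]
      have htop : (top : M Q) ∉ S := fun h => h1 (Or.inl h)
      have hγA : ∀ a : Q, emb a ∈ S → a ≤ γ := fun a haS => by
        by_contra h
        exact h1 (Or.inr ⟨h2, a, haS, h⟩)
      rcases b with _ | _ | q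
      · -- b = top
        have hmem : (top : M Q) ∈ (fun m : M Q => Mmul mul M.top m) '' S := ⟨unit, h2, rfl⟩
        rw [hS, sSup_def, MsSup, if_pos (Or.inl hmem)]
        rfl
      · rw [hid, hS]
        rfl
      · rw [hS]
        let g : M Q → Q := fun m => match m with
          | M.top => q ⊔ mul q ⊤
          | M.unit => q
          | M.emb a => mul q a
        have himg : (fun m : M Q => Mmul mul (emb q) m) '' S = emb '' (g '' S) := by
          rw [← Set.image_comp]
          exact Set.image_congr fun m _ => by rcases m with _ | _ | a <;> rfl
        rw [himg, emb_sSup']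
        refine congrArg emb (le_antisymm (le_sSup ⟨unit, h2, rfl⟩) (sSup_le ?_))
        rintro x ⟨m, hm, rfl⟩
        rcases m with _ | _ | a
        · exact absurd hm htop
        · exact le_refl q
        · exact le_trans (hmono_r a γ q (hγA a hm)) (le_trans le_sup_right (ha q))
    · have htop : (top : M Q) ∉ S := fun h => h1 (Or.inl h)
      have hS : sSup S = emb (sSup {a : Q | emb a ∈ S}) := by
        rw [sSup_def, MsSup, if_neg h1, if_neg h2]
      rcases b with _ | _ | q
      · -- b = top
        rw [hS]
        let g : M Q → Q := fun m => match m with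
          | M.emb a => a ⊔ mul ⊤ a
          | _ => (⊥ : Q)
        have himg : (fun m : M Q => Mmul mul M.top m) '' S = emb '' (g '' S) := by
          rw [← Set.image_comp]
          refine Set.image_congr fun m hm => ?_
          rcases m with _ | _ | a
          · exact absurd hm htop
          · exact absurd hm h2
          · rfl
        rw [himg, emb_sSup']
        refine congrArg emb (le_antisymm ?_ ?_)
        · refine sup_le (sSup_le fun a haA => le_trans le_sup_left (le_sSup ⟨emb a, haA, rfl⟩)) ?_
          rw [hsSup_right]
          exact iSup₂_le fun a haA => le_trans le_sup_right (le_sSup ⟨emb a, haA, rfl⟩)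
        · refine sSup_le ?_
          rintro x ⟨m, hm, rfl⟩
          rcases m with _ | _ | a
          · exact absurd hm htop
          · exact absurd hm h2
          · exact sup_le (le_trans (le_sSup hm) le_sup_left)
              (le_trans (hmono_r a _ ⊤ (le_sSup hm)) le_sup_right)
      · rw [hid]
        rw [hS]
        rfl
      · rw [hS]
        let g : M Q → Q := fun m => match m with
          | M.top => q ⊔ mul q ⊤
          | M.unit => q
          | M.emb a => mul q a
        have himg : (fun m : M Q => Mmul mul (emb q) m) '' S = emb '' (g '' S) := by
          rw [← Set.image_comp]
          exact Set.image_congr fun m _ => by rcases m with _ | _ | a <;> rfl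
        rw [himg, emb_sSup']
        refine congrArg emb ?_
        have hgS : g '' S = (fun a => mul q a) '' {a : Q | emb a ∈ S} := by
          ext x
          constructor
          · rintro ⟨m, hm, rfl⟩
            rcases m with _ | _ | a
            · exact absurd hm htop
            · exact absurd hm h2
            · exact ⟨a, hm, rfl⟩
          · rintro ⟨a, haA, rfl⟩
            exact ⟨emb a, haA, rfl⟩
        rw [hgS, sSup_image, hsSup_right]

end Stmt11Aux

/-- A quantale `Q` with `γ ≠ ⊤` satisfying conditions (a), (b) and the
nondistributivity condition (c) extends (by an isolated unit `e` with `e⁻ = ι γ`,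
`e⁺ = ⊤`) to a unitally nondistributive unital quantale `M`: the unit `e` is
◁-approximable and does not meet-distribute over arbitrary joins. -/
theorem stmt_11 {Q : Type u} [CompleteLattice Q] (mul : Q → Q → Q)
    (hassoc : ∀ a b c : Q, mul (mul a b) c = mul a (mul b c))
    (hsSup_left : ∀ (A : Set Q) (b : Q), mul (sSup A) b = ⨆ a ∈ A, mul a b)
    (hsSup_right : ∀ (A : Set Q) (b : Q), mul b (sSup A) = ⨆ a ∈ A, mul b a)
    (γ : Q) (hγ : γ ≠ ⊤)
    (ha : ∀ α : Q, mul γ α ⊔ mul α γ ≤ α)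
    (hb : ∀ α β : Q, ¬ β ≤ γ →
      mul ⊤ α ≤ mul β α ⊔ α ∧ mul α ⊤ ≤ mul α β ⊔ α)
    (hc : ∃ α β : Q, ¬ γ ⊓ (α ⊔ β) ≤ (γ ⊓ α) ⊔ (γ ⊓ β)) :
    ∃ (M : Type u) (_ : CompleteLattice M) (mulM : M → M → M) (e : M) (ι : Q → M),
      (∀ a b c : M, mulM (mulM a b) c = mulM a (mulM b c)) ∧
      (∀ (A : Set M) (b : M), mulM (sSup A) b = ⨆ a ∈ A, mulM a b) ∧
      (∀ (A : Set M) (b : M), mulM b (sSup A) = ⨆ a ∈ A, mulM b a) ∧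
      (∀ m : M, mulM e m = m ∧ mulM m e = m) ∧
      Function.Injective ι ∧
      (∀ p q : Q, ι (mul p q) = mulM (ι p) (ι q)) ∧
      (∀ A : Set Q, ι (sSup A) = ⨆ a ∈ A, ι a) ∧
      (∀ A : Set Q, A.Nonempty → ι (sInf A) = ⨅ a ∈ A, ι a) ∧
      (∀ m : M, m ∈ Set.range ι ∨ m = e ∨ m = ⊤) ∧
      e ∉ Set.range ι ∧ (⊤ : M) ∉ Set.range ι ∧
      ({m : M | m ≤ e} \ {e} = {m : M | m ≤ ι γ}) ∧
      ({m : M | e ≤ m} \ {e} = {(⊤ : M)}) ∧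
      e ≤ sSup {m : M | ∀ A : Set M, e ≤ sSup A → ∃ c ∈ A, m ≤ c} ∧
      (∃ A : Set M, ¬ e ⊓ sSup A ≤ ⨆ m ∈ A, e ⊓ m) := by
  classical
  open Stmt11Aux in
  have hsup_l : ∀ a b c : Q, mul (a ⊔ b) c = mul a c ⊔ mul b c := by
    intro a b c
    have h := hsSup_left {a, b} c
    rw [sSup_pair] at h
    rw [h, iSup_pair]
  have hsup_r : ∀ a b c : Q, mul a (b ⊔ c) = mul a b ⊔ mul a c := by
    intro a b c
    have h := hsSup_right {b, c} a
    rw [sSup_pair] at h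
    rw [h, iSup_pair]
  have hmono_l : ∀ a b c : Q, a ≤ b → mul a c ≤ mul b c := by
    intro a b c h
    have h2 : mul b c = mul a c ⊔ mul b c := by rw [← hsup_l, sup_eq_right.mpr h]
    rw [h2]
    exact le_sup_left
  have hmono_r : ∀ a b c : Q, a ≤ b → mul c a ≤ mul c b := by
    intro a b c h
    have h2 : mul c b = mul c a ⊔ mul c b := by rw [← hsup_r, sup_eq_right.mpr h]
    rw [h2]
    exact le_sup_left
  refine ⟨Stmt11Aux.M Q, Stmt11Aux.MCL γ, Stmt11Aux.Mmul mul, Stmt11Aux.M.unit,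
    Stmt11Aux.M.emb, ?_, ?_, ?_, ?_, ?_, ?_, ?_, ?_, ?_, ?_, ?_, ?_, ?_, ?_, ?_⟩
  · exact Stmt11Aux.Mmul_assoc mul hassoc hsup_l hsup_r hmono_l hmono_r
  · exact Stmt11Aux.Mmul_sSup_left mul γ hsSup_left ha (fun α β h => (hb α β h).1) hmono_l
  · exact Stmt11Aux.Mmul_sSup_right mul γ hsSup_right ha (fun α β h => (hb α β h).2) hmono_r
  · exact Stmt11Aux.Mmul_unit mul
  · exact Stmt11Aux.emb_injective
  · exact fun p q => rfl
  · exact Stmt11Aux.emb_sSup γ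
  · exact Stmt11Aux.emb_sInf γ
  · intro m
    rcases m with _ | _ | a
    · exact Or.inr (Or.inr (Stmt11Aux.top_def γ).symm)
    · exact Or.inr (Or.inl rfl)
    · exact Or.inl ⟨a, rfl⟩
  · rintro ⟨a, h⟩
    exact nomatch h
  · rintro ⟨a, h⟩
    exact nomatch (h.trans (Stmt11Aux.top_def γ))
  · ext m
    simp only [Set.mem_diff, Set.mem_setOf_eq, Set.mem_singleton_iff]
    rcases m with _ | _ | a
    · exact ⟨fun ⟨h, _⟩ => (show False from h).elim, fun h => (show False from h).elim⟩
    · exact ⟨fun ⟨_, hne⟩ => absurd rfl hne, fun h => (show False from h).elim⟩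
    · exact ⟨fun ⟨h, _⟩ => h, fun h => ⟨h, fun hcon => nomatch hcon⟩⟩
  · ext m
    simp only [Set.mem_diff, Set.mem_setOf_eq, Set.mem_singleton_iff]
    rcases m with _ | _ | a
    · exact ⟨fun _ => (Stmt11Aux.top_def γ).symm,
        fun _ => ⟨Stmt11Aux.Mle_top γ _, fun hcon => nomatch hcon⟩⟩
    · exact ⟨fun ⟨_, hne⟩ => absurd rfl hne,
        fun h => nomatch (h.trans (Stmt11Aux.top_def γ))⟩
    · exact ⟨fun ⟨h, _⟩ => (show False from h).elim,
        fun h => nomatch (h.trans (Stmt11Aux.top_def γ))⟩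
  · letI := Stmt11Aux.MCL γ
    refine le_sSup ?_
    intro A hA
    by_cases h1 : Stmt11Aux.M.top ∈ A ∨
        (Stmt11Aux.M.unit ∈ A ∧ ∃ a : Q, Stmt11Aux.M.emb a ∈ A ∧ ¬ a ≤ γ)
    · rcases h1 with hn | ⟨hu, _⟩
      · exact ⟨Stmt11Aux.M.top, hn, Stmt11Aux.Mle_top γ _⟩
      · exact ⟨Stmt11Aux.M.unit, hu, le_refl _⟩
    · by_cases h2 : (Stmt11Aux.M.unit : Stmt11Aux.M Q) ∈ A
      · exact ⟨Stmt11Aux.M.unit, h2, le_refl _⟩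
      · exfalso
        rw [Stmt11Aux.sSup_def, Stmt11Aux.MsSup, if_neg h1, if_neg h2] at hA
        exact hA
  · letI := Stmt11Aux.MCL γ
    obtain ⟨α, β, hαβ⟩ := hc
    refine ⟨{Stmt11Aux.M.emb α, Stmt11Aux.M.emb β}, ?_⟩
    have h1 : sSup ({Stmt11Aux.M.emb α, Stmt11Aux.M.emb β} : Set (Stmt11Aux.M Q))
        = Stmt11Aux.M.emb (α ⊔ β) := by
      rw [show ({Stmt11Aux.M.emb α, Stmt11Aux.M.emb β} : Set (Stmt11Aux.M Q))
          = Stmt11Aux.M.emb '' {α, β} from by rw [Set.image_pair],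
        Stmt11Aux.emb_sSup' γ, sSup_pair]
    have h2 : (⨆ m ∈ ({Stmt11Aux.M.emb α, Stmt11Aux.M.emb β} : Set (Stmt11Aux.M Q)),
        Stmt11Aux.M.unit ⊓ m) = Stmt11Aux.M.emb ((γ ⊓ α) ⊔ (γ ⊓ β)) := by
      rw [iSup_pair, Stmt11Aux.unit_inf_emb γ α, Stmt11Aux.unit_inf_emb γ β,
        ← sSup_pair,
        show ({Stmt11Aux.M.emb (γ ⊓ α), Stmt11Aux.M.emb (γ ⊓ β)} : Set (Stmt11Aux.M Q))
          = Stmt11Aux.M.emb '' {γ ⊓ α, γ ⊓ β} from by rw [Set.image_pair],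
        Stmt11Aux.emb_sSup' γ, sSup_pair]
    rw [h1, h2, Stmt11Aux.unit_inf_emb γ]
    intro hle
    exact hαβ hle
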